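/- There exists a constant C₃ > 0 such that for every α ∈ (0,1) and every s ∈ (0,1) one has C₃ · log s ≤ ∫_1^s (1/S_α(σ)) dσ ≤ 0 (note that log s < 0 for s ∈ (0,1), so the left-hand side is negative). -/

import Mathlib

open Real

theorem stmt3 (χ q : ℝ) (hχ : 0 < χ) (hq : q ≤ 1) :
    ∃ C₃ > (0:ℝ), ∀ α ∈ Set.Ioo (0:ℝ) 1, ∀ s ∈ Set.Ioo (0:ℝ) 1,
      C₃ * Real.log s ≤
        (∫ σ in (1:ℝ)..s, 1 / (χ * σ * (σ + 1) ^ (q - 1) / (1 + α * (σ + 1)) ^ q)) ∧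
      (∫ σ in (1:ℝ)..s, 1 / (χ * σ * (σ + 1) ^ (q - 1) / (1 + α * (σ + 1)) ^ q)) ≤ 0 := by
  have hc0 : (0:ℝ) < (2:ℝ) ^ (q - 1) := rpow_pos_of_pos two_pos _
  set c : ℝ := (2:ℝ) ^ (q - 1) with hc
  refine ⟨3 / (χ * c), by positivity, ?_⟩
  rintro α ⟨hα0, hα1⟩ s ⟨hs0, hs1⟩
  set C : ℝ := 3 / (χ * c) with hC
  set f : ℝ → ℝ := fun σ => 1 / (χ * σ * (σ + 1) ^ (q - 1) / (1 + α * (σ + 1)) ^ q)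
    with hf
  -- positivity of the denominator on (0, ∞)
  have hgpos : ∀ σ : ℝ, 0 < σ →
      0 < χ * σ * (σ + 1) ^ (q - 1) / (1 + α * (σ + 1)) ^ q := by
    intro σ hσ
    have h1 : (0:ℝ) < (σ + 1) ^ (q - 1) := rpow_pos_of_pos (by linarith) _
    have h2 : (0:ℝ) < (1 + α * (σ + 1)) ^ q :=
      rpow_pos_of_pos (by nlinarith) _
    positivity
  -- pointwise bound f σ ≤ C / σ on [s, 1]
  have hbound : ∀ σ ∈ Set.Icc s 1, f σ ≤ C * (1 / σ) := by
    rintro σ ⟨hσs, hσ1⟩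
    have hσ0 : 0 < σ := lt_of_lt_of_le hs0 hσs
    have hb1 : (1:ℝ) ≤ 1 + α * (σ + 1) := by nlinarith
    have hb3 : 1 + α * (σ + 1) ≤ 3 := by nlinarith
    have hN : (1 + α * (σ + 1)) ^ q ≤ 3 := by
      rcases le_or_gt 0 q with hq0 | hq0
      · calc (1 + α * (σ + 1)) ^ q ≤ (3:ℝ) ^ q :=
              rpow_le_rpow (by linarith) hb3 hq0
          _ ≤ (3:ℝ) ^ (1:ℝ) := rpow_le_rpow_of_exponent_le (by norm_num) hq
          _ = 3 := rpow_one 3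
      · have := rpow_le_one_of_one_le_of_nonpos hb1 hq0.le
        linarith
    have hD : c ≤ (σ + 1) ^ (q - 1) :=
      rpow_le_rpow_of_nonpos (by linarith) (by linarith) (by linarith)
    have hA : χ * c * σ ≤ χ * σ * (σ + 1) ^ (q - 1) := by
      have := mul_le_mul_of_nonneg_left hD (by positivity : (0:ℝ) ≤ χ * σ)
      nlinarith
    have hB : (0:ℝ) < (1 + α * (σ + 1)) ^ q := rpow_pos_of_pos (by nlinarith) _
    have hfσ : f σ = (1 + α * (σ + 1)) ^ q / (χ * σ * (σ + 1) ^ (q - 1)) := by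
      simp [hf, one_div_div]
    rw [hfσ]
    have hCσ : C * (1 / σ) = 3 / (χ * c * σ) := by
      rw [hC]; field_simp
    rw [hCσ]
    exact div_le_div₀ (by norm_num) hN (by positivity) hA
  -- nonnegativity of f on [s, 1]
  have hfnn : ∀ σ ∈ Set.Icc s 1, 0 ≤ f σ := by
    rintro σ ⟨hσs, hσ1⟩
    have := hgpos σ (lt_of_lt_of_le hs0 hσs)
    positivity
  -- integrability of f on [s, 1]
  have hcont : ContinuousOn f (Set.uIcc s 1) := by
    rw [Set.uIcc_of_le hs1.le]
    apply ContinuousOn.div continuousOn_const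
    · apply ContinuousOn.div
      · apply ContinuousOn.mul
        · exact (continuous_const.mul continuous_id).continuousOn
        · apply ContinuousOn.rpow_const
            ((continuous_id.add continuous_const).continuousOn)
          rintro x ⟨hx1, hx2⟩
          left
          have : 0 < x := lt_of_lt_of_le hs0 hx1
          simp only [Pi.add_apply, id_eq]
          positivity
      · apply ContinuousOn.rpow_const
          ((continuous_const.add (continuous_const.mul
            (continuous_id.add continuous_const))).continuousOn)
        rintro x ⟨hx1, hx2⟩
        left
        have hx0 : 0 < x := lt_of_lt_of_le hs0 hx1
        simp only [Pi.add_apply, Pi.mul_apply, id_eq]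
        nlinarith
      · rintro x ⟨hx1, hx2⟩
        have hx0 : 0 < x := lt_of_lt_of_le hs0 hx1
        exact ne_of_gt (rpow_pos_of_pos (by nlinarith) _)
    · rintro x ⟨hx1, hx2⟩
      exact ne_of_gt (hgpos x (lt_of_lt_of_le hs0 hx1))
  have hint1 : IntervalIntegrable f MeasureTheory.volume s 1 :=
    hcont.intervalIntegrable
  have hint2 : IntervalIntegrable (fun σ => C * (1 / σ)) MeasureTheory.volume s 1 := by
    apply ContinuousOn.intervalIntegrable
    apply ContinuousOn.mul continuousOn_const
    apply ContinuousOn.div continuousOn_const continuousOn_id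
    rw [Set.uIcc_of_le hs1.le]
    rintro x ⟨hx1, hx2⟩
    exact ne_of_gt (lt_of_lt_of_le hs0 hx1)
  have hmono : (∫ σ in s..(1:ℝ), f σ) ≤ ∫ σ in s..(1:ℝ), C * (1 / σ) :=
    intervalIntegral.integral_mono_on hs1.le hint1 hint2 hbound
  have hlog : (∫ σ in s..(1:ℝ), C * (1 / σ)) = -(C * Real.log s) := by
    rw [intervalIntegral.integral_const_mul]
    rw [integral_one_div]
    · rw [Real.log_div one_ne_zero (ne_of_gt hs0), Real.log_one]
      ring
    · rw [Set.uIcc_of_le hs1.le]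
      rintro ⟨hx1, hx2⟩
      linarith
  have hnn : 0 ≤ ∫ σ in s..(1:ℝ), f σ :=
    intervalIntegral.integral_nonneg hs1.le hfnn
  have hsymm : (∫ σ in (1:ℝ)..s, f σ) = -∫ σ in s..(1:ℝ), f σ :=
    intervalIntegral.integral_symm s 1
  constructor
  · show C * Real.log s ≤ ∫ σ in (1:ℝ)..s, f σ
    rw [hsymm]
    rw [hlog] at hmono
    linarith
  · show (∫ σ in (1:ℝ)..s, f σ) ≤ 0
    rw [hsymm]
    linarith
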